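/- arXiv:2410.11471 — 4 statements merged into one kernel-verified Lean document; each statement's English description precedes it below -/
import Mathlib

section
/- Let d ∈ ℕ, θ ∈ ℝ^d, and i, j ∈ {1,…,d}. Let F : ℝ^d → ℝ be three times continuously differentiable on a neighborhood of θ. For ε > 0 set λ₁(ε) = F(θ + ε(eᵢ+eⱼ)), λ₂(ε) = F(θ + εeᵢ), λ₃(ε) = F(θ + εeⱼ), λ₄(ε) = F(θ), and define n(ε) := λ₁(ε) + λ₂(ε) − 2·min(λ₁(ε), λ₂(ε)) + λ₃(ε) + λ₄(ε) − 2·min(λ₃(ε), λ₄(ε)) − 2·min(λ₁(ε) − min(λ₁(ε), λ₂(ε)), λ₃(ε) − min(λ₃(ε), λ₄(ε))) − 2·min(λ₂(ε) − min(λ₁(ε), λ₂(ε)), λ₄(ε) − min(λ₃(ε), λ₄(ε))). If ∂F/∂θⱼ(θ) > 0 and ∂²F/∂θᵢ∂θⱼ(θ) > 0, then n(ε)/ε² → ∂²F/∂θᵢ∂θⱼ(θ) as ε → 0⁺. -/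
open Filter Topology

set_option maxHeartbeats 1000000

/-- Second-order Taylor expansion of the residual splitting rate `n_k(x, θ̂)` of the
four-fold split coupling, positive-sign case (eq. (A.3) of the paper):
`n(ε)/ε² → ∂²F/∂θᵢ∂θⱼ(θ)` as `ε → 0⁺` when both `∂F/∂θⱼ(θ) > 0` and
`∂²F/∂θᵢ∂θⱼ(θ) > 0`. -/
theorem splitting_rate_second_order_expansion_pos
    (d : ℕ) (θ : EuclideanSpace ℝ (Fin d)) (i j : Fin d)
    (F : EuclideanSpace ℝ (Fin d) → ℝ) (hF : ContDiffAt ℝ 3 F θ)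
    (hj : 0 < fderiv ℝ F θ (EuclideanSpace.single j 1))
    (hij : 0 < fderiv ℝ (fun x => fderiv ℝ F x (EuclideanSpace.single j 1)) θ
      (EuclideanSpace.single i 1)) :
    Tendsto (fun ε : ℝ =>
      let l1 : ℝ := F (θ + ε • (EuclideanSpace.single i 1 + EuclideanSpace.single j 1))
      let l2 : ℝ := F (θ + ε • EuclideanSpace.single i 1)
      let l3 : ℝ := F (θ + ε • EuclideanSpace.single j 1)
      let l4 : ℝ := F θ
      (l1 + l2 - 2 * min l1 l2 + l3 + l4 - 2 * min l3 l4
        - 2 * min (l1 - min l1 l2) (l3 - min l3 l4)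
        - 2 * min (l2 - min l1 l2) (l4 - min l3 l4)) / ε ^ 2)
      (𝓝[>] 0)
      (𝓝 (fderiv ℝ (fun x => fderiv ℝ F x (EuclideanSpace.single j 1)) θ
        (EuclideanSpace.single i 1))) := by
  set v := EuclideanSpace.single i (1:ℝ) with hv
  set w := EuclideanSpace.single j (1:ℝ) with hw
  obtain ⟨u, hu, hFu⟩ := hF.contDiffOn le_rfl (by simp)
  obtain ⟨r, hr, hball⟩ := Metric.mem_nhds_iff.mp hu
  set s := Metric.ball θ r with hs
  have hso : IsOpen s := Metric.isOpen_ball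
  have hθs : θ ∈ s := Metric.mem_ball_self hr
  have hFs : ContDiffOn ℝ 3 F s := hFu.mono hball
  have hFd : DifferentiableOn ℝ F s := hFs.differentiableOn (by norm_num)
  set ψ := fun x => fderiv ℝ F x w with hψdef
  have hψ : ContDiffOn ℝ 2 ψ s :=
    (hFs.fderiv_of_isOpen hso (by norm_num)).clm_apply contDiffOn_const
  have hψd : DifferentiableOn ℝ ψ s := hψ.differentiableOn (by norm_num)
  set χ := fun x => fderiv ℝ ψ x v with hχdef
  have hχc : ContinuousOn χ s :=
    ((hψ.fderiv_of_isOpen (m := 1) hso (by norm_num)).continuousOn).clm_apply continuousOn_const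
  -- derivative of F along the w direction
  have key_w : ∀ (a : EuclideanSpace ℝ (Fin d)) (t : ℝ), a + t • w ∈ s →
      HasDerivAt (fun t : ℝ => F (a + t • w)) (ψ (a + t • w)) t := by
    intro a t hmem
    have hL : HasDerivAt (fun t : ℝ => a + t • w) w t := by
      simpa using ((hasDerivAt_id t).smul_const w).const_add a
    exact ((hFd.differentiableAt (hso.mem_nhds hmem)).hasFDerivAt).comp_hasDerivAt t hL
  -- derivative of ψ along the v direction
  have key_v : ∀ (a : EuclideanSpace ℝ (Fin d)) (t : ℝ), a + t • v ∈ s →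
      HasDerivAt (fun t : ℝ => ψ (a + t • v)) (χ (a + t • v)) t := by
    intro a t hmem
    have hL : HasDerivAt (fun t : ℝ => a + t • v) v t := by
      simpa using ((hasDerivAt_id t).smul_const v).const_add a
    exact ((hψd.differentiableAt (hso.mem_nhds hmem)).hasFDerivAt).comp_hasDerivAt t hL
  -- mean value theorem for F along w
  have mvtF : ∀ (ε : ℝ), 0 < ε → ∀ (a : EuclideanSpace ℝ (Fin d)),
      (∀ t ∈ Set.Icc (0:ℝ) ε, a + t • w ∈ s) →
      ∃ c ∈ Set.Ioo 0 ε, F (a + ε • w) - F a = ε * ψ (a + c • w) := by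
    intro ε hε a hseg
    obtain ⟨c, hc, heq⟩ := exists_hasDerivAt_eq_slope (fun t => F (a + t • w))
      (fun t => ψ (a + t • w)) hε
      (fun t ht => (key_w a t (hseg t ht)).continuousAt.continuousWithinAt)
      (fun t ht => key_w a t (hseg t (Set.mem_Icc_of_Ioo ht)))
    refine ⟨c, hc, ?_⟩
    simp only [zero_smul, add_zero, sub_zero] at heq
    rw [heq]
    field_simp
  -- mean value theorem for ψ along v
  have mvtψ : ∀ (ε : ℝ), 0 < ε → ∀ (a : EuclideanSpace ℝ (Fin d)),
      (∀ t ∈ Set.Icc (0:ℝ) ε, a + t • v ∈ s) →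
      ∃ c ∈ Set.Ioo 0 ε, ψ (a + ε • v) - ψ a = ε * χ (a + c • v) := by
    intro ε hε a hseg
    obtain ⟨c, hc, heq⟩ := exists_hasDerivAt_eq_slope (fun t => ψ (a + t • v))
      (fun t => χ (a + t • v)) hε
      (fun t ht => (key_v a t (hseg t ht)).continuousAt.continuousWithinAt)
      (fun t ht => key_v a t (hseg t (Set.mem_Icc_of_Ioo ht)))
    refine ⟨c, hc, ?_⟩
    simp only [zero_smul, add_zero, sub_zero] at heq
    rw [heq]
    field_simp
  -- positivity of ψ near θ
  have hψθ : ContinuousAt ψ θ := hψ.continuousOn.continuousAt (hso.mem_nhds hθs)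
  have hχθ : ContinuousAt χ θ := hχc.continuousAt (hso.mem_nhds hθs)
  have hψθpos : 0 < ψ θ := hj
  have hχθpos : 0 < χ θ := hij
  obtain ⟨r₁, hr₁, hψpos⟩ : ∃ r₁ > 0, ∀ x, dist x θ < r₁ → 0 < ψ x := by
    have h1 : ∀ᶠ x in 𝓝 θ, 0 < ψ x := hψθ (Ioi_mem_nhds hψθpos)
    obtain ⟨r₁, hr₁, h⟩ := Metric.eventually_nhds_iff.mp h1
    exact ⟨r₁, hr₁, fun x hx => h hx⟩
  obtain ⟨r₃, hr₃, hχpos⟩ : ∃ r₃ > 0, ∀ x, dist x θ < r₃ → 0 < χ x := by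
    have h1 : ∀ᶠ x in 𝓝 θ, 0 < χ x := hχθ (Ioi_mem_nhds hχθpos)
    obtain ⟨r₃, hr₃, h⟩ := Metric.eventually_nhds_iff.mp h1
    exact ⟨r₃, hr₃, fun x hx => h hx⟩
  rw [Metric.tendsto_nhdsWithin_nhds]
  intro δ hδ
  obtain ⟨r₂, hr₂, hχnear⟩ := Metric.continuousAt_iff.mp hχθ δ hδ
  refine ⟨min (min r r₁) (min r₂ r₃) / 2, by positivity, ?_⟩
  intro ε hεmem hεd
  set ρ := min (min r r₁) (min r₂ r₃) with hρ
  have hρr : ρ ≤ r := le_trans (min_le_left _ _) (min_le_left _ _)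
  have hρr₁ : ρ ≤ r₁ := le_trans (min_le_left _ _) (min_le_right _ _)
  have hρr₂ : ρ ≤ r₂ := le_trans (min_le_right _ _) (min_le_left _ _)
  have hρr₃ : ρ ≤ r₃ := le_trans (min_le_right _ _) (min_le_right _ _)
  have hεpos : 0 < ε := hεmem
  have hεlt : 2 * ε < ρ := by
    have hd : dist ε 0 = ε := by rw [Real.dist_eq, sub_zero, abs_of_pos hεpos]
    rw [hd] at hεd
    linarith
  -- membership of all relevant points in the various balls
  have hdist : ∀ (a b : ℝ), a ∈ Set.Icc 0 ε → b ∈ Set.Icc 0 ε →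
      ∀ p : EuclideanSpace ℝ (Fin d), p = θ + a • v + b • w → dist p θ < ρ := by
    intro a b ha hb p hp
    have h1 : dist p θ = ‖a • v + b • w‖ := by
      rw [hp, dist_eq_norm]; congr 1; abel
    have h2 : ‖a • v + b • w‖ ≤ |a| + |b| := by
      calc ‖a • v + b • w‖ ≤ ‖a • v‖ + ‖b • w‖ := norm_add_le _ _
        _ = |a| + |b| := by
            simp [hv, hw, norm_smul, EuclideanSpace.norm_single, Real.norm_eq_abs]
    have h3 : |a| ≤ ε := by rw [abs_of_nonneg ha.1]; exact ha.2
    have h4 : |b| ≤ ε := by rw [abs_of_nonneg hb.1]; exact hb.2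
    rw [h1]; linarith
  have hmem : ∀ (a b : ℝ), a ∈ Set.Icc 0 ε → b ∈ Set.Icc 0 ε →
      ∀ p : EuclideanSpace ℝ (Fin d), p = θ + a • v + b • w → p ∈ s := by
    intro a b ha hb p hp
    exact Metric.mem_ball.mpr (lt_of_lt_of_le (hdist a b ha hb p hp) hρr)
  have h0ε : (0:ℝ) ∈ Set.Icc (0:ℝ) ε := ⟨le_refl _, hεpos.le⟩
  have hεε : ε ∈ Set.Icc (0:ℝ) ε := ⟨hεpos.le, le_refl _⟩
  -- l3 - l4
  obtain ⟨c₁, hc₁, h34⟩ := mvtF ε hεpos θ (fun t ht => hmem 0 t h0ε ht _ (by simp))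
  -- l1 - l2
  obtain ⟨c₂, hc₂, h12⟩ := mvtF ε hεpos (θ + ε • v)
    (fun t ht => hmem ε t hεε ht _ rfl)
  -- G via two mean value theorems
  obtain ⟨c₃, hc₃, hGmid⟩ := exists_hasDerivAt_eq_slope
    (fun t => F (θ + ε • v + t • w) - F (θ + t • w))
    (fun t => ψ (θ + ε • v + t • w) - ψ (θ + t • w)) hεpos
    (fun t ht => (((key_w (θ + ε • v) t (hmem ε t hεε ht _ rfl)).sub
      (key_w θ t (hmem 0 t h0ε ht _ (by simp)))).continuousAt).continuousWithinAt)
    (fun t ht => (key_w (θ + ε • v) t (hmem ε t hεε (Set.mem_Icc_of_Ioo ht) _ rfl)).sub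
      (key_w θ t (hmem 0 t h0ε (Set.mem_Icc_of_Ioo ht) _ (by simp))))
  simp only [zero_smul, add_zero, sub_zero] at hGmid
  have hc₃' : c₃ ∈ Set.Icc (0:ℝ) ε := Set.mem_Icc_of_Ioo hc₃
  obtain ⟨c₄, hc₄, hsecond⟩ := mvtψ ε hεpos (θ + c₃ • w)
    (fun t ht => hmem t c₃ ht hc₃' _ (by abel))
  have hrew : θ + c₃ • w + ε • v = θ + ε • v + c₃ • w := by abel
  rw [hrew] at hsecond
  -- the second difference G equals ε² times χ at an intermediate point
  set ξ := θ + c₃ • w + c₄ • v with hξ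
  have hξdist : dist ξ θ < ρ :=
    hdist c₄ c₃ (Set.mem_Icc_of_Ioo hc₄) hc₃' ξ (by rw [hξ]; abel)
  have hG : F (θ + ε • v + ε • w) - F (θ + ε • v) - (F (θ + ε • w) - F θ)
      = ε ^ 2 * χ ξ := by
    have h1 : ψ (θ + ε • v + c₃ • w) - ψ (θ + c₃ • w)
        = (F (θ + ε • v + ε • w) - F (θ + ε • w) - (F (θ + ε • v) - F θ)) / ε := by
      exact hGmid
    have h2 : F (θ + ε • v + ε • w) - F (θ + ε • w) - (F (θ + ε • v) - F θ)
        = ε * (ψ (θ + ε • v + c₃ • w) - ψ (θ + c₃ • w)) := by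
      rw [h1]; field_simp
    rw [hsecond] at h2
    linear_combination h2
  -- positivity facts
  have hψ1 : 0 < ψ (θ + c₁ • w) :=
    hψpos _ (lt_of_lt_of_le (hdist 0 c₁ h0ε (Set.mem_Icc_of_Ioo hc₁) _ (by simp)) hρr₁)
  have hψ2 : 0 < ψ (θ + ε • v + c₂ • w) :=
    hψpos _ (lt_of_lt_of_le (hdist ε c₂ hεε (Set.mem_Icc_of_Ioo hc₂) _ rfl) hρr₁)
  have hχξ : 0 < χ ξ := hχpos _ (lt_of_lt_of_le hξdist hρr₃)
  have h34pos : 0 < F (θ + ε • w) - F θ := by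
    rw [h34]; positivity
  have h12pos : 0 < F (θ + ε • v + ε • w) - F (θ + ε • v) := by
    rw [h12]; positivity
  have hGpos : F (θ + ε • w) - F θ < F (θ + ε • v + ε • w) - F (θ + ε • v) := by
    have hq := mul_pos (pow_pos hεpos 2) hχξ
    linarith [hG]
  -- rewrite l1's argument
  have hl1 : θ + ε • (v + w) = θ + ε • v + ε • w := by rw [smul_add, add_assoc]
  -- simplify the expression
  show dist ((F (θ + ε • (v + w)) + F (θ + ε • v)
      - 2 * min (F (θ + ε • (v + w))) (F (θ + ε • v)) + F (θ + ε • w) + F θ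
      - 2 * min (F (θ + ε • w)) (F θ)
      - 2 * min (F (θ + ε • (v + w)) - min (F (θ + ε • (v + w))) (F (θ + ε • v)))
          (F (θ + ε • w) - min (F (θ + ε • w)) (F θ))
      - 2 * min (F (θ + ε • v) - min (F (θ + ε • (v + w))) (F (θ + ε • v)))
          (F θ - min (F (θ + ε • w)) (F θ))) / ε ^ 2) (fderiv ℝ ψ θ v) < δ
  rw [hl1]
  have m1 : min (F (θ + ε • v + ε • w)) (F (θ + ε • v)) = F (θ + ε • v) :=
    min_eq_right (by linarith)
  have m2 : min (F (θ + ε • w)) (F θ) = F θ := min_eq_right (by linarith)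
  rw [m1, m2]
  have m3 : min (F (θ + ε • v + ε • w) - F (θ + ε • v)) (F (θ + ε • w) - F θ)
      = F (θ + ε • w) - F θ := min_eq_right (by linarith)
  rw [m3, sub_self, sub_self, min_self]
  have hexpr : (F (θ + ε • v + ε • w) + F (θ + ε • v) - 2 * F (θ + ε • v)
      + F (θ + ε • w) + F θ - 2 * F θ - 2 * (F (θ + ε • w) - F θ) - 2 * 0) / ε ^ 2
      = χ ξ := by
    have hnum : F (θ + ε • v + ε • w) + F (θ + ε • v) - 2 * F (θ + ε • v)
        + F (θ + ε • w) + F θ - 2 * F θ - 2 * (F (θ + ε • w) - F θ) - 2 * 0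
        = ε ^ 2 * χ ξ := by linarith [hG]
    rw [hnum]
    field_simp
  rw [hexpr]
  have := hχnear (lt_of_lt_of_le hξdist hρr₂)
  exact this
end

section
/- Let d ∈ ℕ, θ ∈ ℝ^d, and i, j ∈ {1,…,d}. Let F : ℝ^d → ℝ be three times continuously differentiable on a neighborhood of θ. For ε > 0 set λ₁(ε) = F(θ + ε(eᵢ+eⱼ)), λ₂(ε) = F(θ + εeᵢ), λ₃(ε) = F(θ + εeⱼ), λ₄(ε) = F(θ), and define n(ε) := λ₁(ε) + λ₂(ε) − 2·min(λ₁(ε), λ₂(ε)) + λ₃(ε) + λ₄(ε) − 2·min(λ₃(ε), λ₄(ε)) − 2·min(λ₁(ε) − min(λ₁(ε), λ₂(ε)), λ₃(ε) − min(λ₃(ε), λ₄(ε))) − 2·min(λ₂(ε) − min(λ₁(ε), λ₂(ε)), λ₄(ε) − min(λ₃(ε), λ₄(ε))). If ∂F/∂θⱼ(θ) > 0 and ∂²F/∂θᵢ∂θⱼ(θ) < 0, then n(ε)/ε² → −∂²F/∂θᵢ∂θⱼ(θ) as ε → 0⁺. -/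
open Filter Topology

set_option maxHeartbeats 1000000

lemma mixed_second_diff {E : Type*} [NormedAddCommGroup E] [NormedSpace ℝ E]
    (F : E → ℝ) (θ : E) (hF : ContDiffAt ℝ 2 F θ) (v w : E) :
    Tendsto (fun ε : ℝ => (F (θ + ε • v + ε • w) - F (θ + ε • v) - F (θ + ε • w) + F θ) / ε ^ 2)
      (𝓝[>] 0) (𝓝 (fderiv ℝ (fderiv ℝ F) θ v w)) := by
  set f' : E → (E →L[ℝ] ℝ) := fderiv ℝ F with hf'
  set f'' : E →L[ℝ] E →L[ℝ] ℝ := fderiv ℝ (fderiv ℝ F) θ with hf''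
  -- a ball where F is differentiable
  have hev : ∀ᶠ y in 𝓝 θ, DifferentiableAt ℝ F y := by
    filter_upwards [hF.eventually (by norm_num)] with y hy
    exact hy.differentiableAt (by norm_num)
  obtain ⟨r, rpos, hr⟩ := Metric.eventually_nhds_iff_ball.1 hev
  set s : Set E := Metric.ball θ r with hs
  have s_conv : Convex ℝ s := convex_ball θ r
  have hint : interior s = s := (Metric.isOpen_ball).interior_eq
  have hfd : ∀ x ∈ interior s, HasFDerivAt F (f' x) x := by
    intro x hx
    rw [hint] at hx
    exact (hr x hx).hasFDerivAt
  have xs : θ ∈ s := Metric.mem_ball_self rpos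
  have hx2 : HasFDerivWithinAt f' f'' (interior s) θ := by
    have h1 : ContDiffAt ℝ 1 (fderiv ℝ F) θ := hF.fderiv_right (by norm_num)
    exact ((h1.differentiableAt (by norm_num)).hasFDerivAt).hasFDerivWithinAt
  -- choose the scaling constant
  set c : ℝ := r / (‖v‖ + ‖w‖ + 1) with hc
  have hden : 0 < ‖v‖ + ‖w‖ + 1 := by positivity
  have cpos : 0 < c := div_pos rpos hden
  have hcb : c * (‖v‖ + ‖w‖) < r := by
    rw [hc, div_mul_eq_mul_div, div_lt_iff₀ hden]
    nlinarith [norm_nonneg v, norm_nonneg w]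
  have hmem : ∀ u : E, ‖u‖ ≤ c * (‖v‖ + ‖w‖) → θ + u ∈ interior s := by
    intro u hu
    rw [hint, hs, Metric.mem_ball, dist_eq_norm]
    simpa using lt_of_le_of_lt hu hcb
  have hcv : θ + c • v ∈ interior s := hmem _ (by
    rw [norm_smul, Real.norm_eq_abs, abs_of_pos cpos]
    nlinarith [norm_nonneg w, cpos.le])
  have hcvw : θ + c • v + c • w ∈ interior s := by
    rw [add_assoc]
    exact hmem _ (le_trans (norm_add_le _ _) (by
      rw [norm_smul, norm_smul, Real.norm_eq_abs, abs_of_pos cpos]; ring_nf; rfl))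
  have h0 : θ + (0 : E) ∈ interior s := hmem _ (by
    simp; positivity)
  have h0w : θ + (0 : E) + c • w ∈ interior s := by
    rw [add_zero]
    exact hmem _ (by
      rw [norm_smul, Real.norm_eq_abs, abs_of_pos cpos]
      nlinarith [norm_nonneg v, cpos.le])
  have A := s_conv.taylor_approx_two_segment hfd xs hx2 hcv hcvw
  have B := s_conv.taylor_approx_two_segment hfd xs hx2 h0 h0w
  have AB := A.sub B
  -- simplify the difference
  have key : (fun h : ℝ => F (θ + (h * c) • v + (h * c) • w) - F (θ + (h * c) • v)
      - F (θ + (h * c) • w) + F θ - ((h * c) ^ 2) • f'' v w) =o[𝓝[>] 0] fun h => h ^ 2 := by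
    refine AB.congr' ?_ (by rfl)
    filter_upwards with h
    have e1 : h • c • v = (h * c) • v := (smul_smul h c v)
    have e2 : h • c • w = (h * c) • w := (smul_smul h c w)
    have e3 : h • (0 : E) = 0 := smul_zero h
    have e4 : f'' (c • v) (c • w) = (c * c) • f'' v w := by
      simp [smul_smul, mul_comm]
      ring
    have e5 : f'' (0 : E) (c • w) = 0 := by simp
    rw [e1, e2, e3, e4, e5]
    simp only [add_zero, smul_eq_mul]
    ring
  -- substitute h = ε / c
  have hcomp : Tendsto (fun ε : ℝ => ε / c) (𝓝[>] 0) (𝓝[>] 0) := by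
    rw [tendsto_nhdsWithin_iff]
    constructor
    · have h1 : Tendsto (fun ε : ℝ => ε / c) (𝓝 (0 : ℝ)) (𝓝 (0 / c)) :=
        tendsto_id.div_const c
      rw [zero_div] at h1
      exact h1.mono_left nhdsWithin_le_nhds
    · filter_upwards [self_mem_nhdsWithin] with ε (hε : 0 < ε)
      exact div_pos hε cpos
  have key2 := key.comp_tendsto hcomp
  have key3 : (fun ε : ℝ => F (θ + ε • v + ε • w) - F (θ + ε • v)
      - F (θ + ε • w) + F θ - ε ^ 2 • f'' v w) =o[𝓝[>] 0] fun ε => ε ^ 2 := by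
    have hO : (fun ε : ℝ => (ε / c) ^ 2) =O[𝓝[>] 0] fun ε => ε ^ 2 := by
      have hfe : (fun ε : ℝ => (ε / c) ^ 2) = fun ε : ℝ => (1 / c ^ 2) * ε ^ 2 := by
        funext ε; field_simp
      rw [hfe]
      exact Asymptotics.isBigO_const_mul_self _ _ _
    refine (Asymptotics.IsLittleO.trans_isBigO ?_ hO)
    refine key2.congr' ?_ (by rfl)
    filter_upwards with ε
    have : ε / c * c = ε := div_mul_cancel₀ ε (ne_of_gt cpos)
    simp only [Function.comp_apply, this]
  -- conclude the limit
  have hquot : Tendsto (fun ε : ℝ => (F (θ + ε • v + ε • w) - F (θ + ε • v)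
      - F (θ + ε • w) + F θ - ε ^ 2 • f'' v w) / ε ^ 2) (𝓝[>] 0) (𝓝 0) := by
    apply key3.tendsto_div_nhds_zero
  have heq : ∀ᶠ ε in 𝓝[>] (0 : ℝ),
      (F (θ + ε • v + ε • w) - F (θ + ε • v) - F (θ + ε • w) + F θ - ε ^ 2 • f'' v w) / ε ^ 2
        + f'' v w
      = (F (θ + ε • v + ε • w) - F (θ + ε • v) - F (θ + ε • w) + F θ) / ε ^ 2 := by
    filter_upwards [self_mem_nhdsWithin] with ε (hε : 0 < ε)
    have hε2 : ε ^ 2 ≠ 0 := by positivity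
    field_simp
    ring
  have := (hquot.add_const (f'' v w)).congr' heq
  simpa using this

lemma slope_dir {E : Type*} [NormedAddCommGroup E] [NormedSpace ℝ E]
    (F : E → ℝ) (θ : E) (hF : DifferentiableAt ℝ F θ) (u : E) :
    Tendsto (fun ε : ℝ => (F (θ + ε • u) - F θ) / ε) (𝓝[>] 0) (𝓝 (fderiv ℝ F θ u)) := by
  have h1 : HasDerivAt (fun t : ℝ => θ + t • u) u 0 := by
    simpa using ((hasDerivAt_id (0 : ℝ)).smul_const u).const_add θ
  have h2 : HasFDerivAt F (fderiv ℝ F θ) (θ + (0 : ℝ) • u) := by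
    simpa using hF.hasFDerivAt
  have hg : HasDerivAt (fun t : ℝ => F (θ + t • u)) (fderiv ℝ F θ u) 0 :=
    h2.comp_hasDerivAt 0 h1
  have := hasDerivAt_iff_tendsto_slope.1 hg
  have hmono : 𝓝[>] (0 : ℝ) ≤ 𝓝[≠] (0 : ℝ) :=
    nhdsWithin_mono 0 (fun x hx => ne_of_gt hx)
  refine (this.mono_left hmono).congr fun ε => ?_
  simp [slope_def_field, div_eq_inv_mul]

/-- Second-order Taylor expansion of the residual splitting rate `n_k(x, θ̂)` of the
four-fold split coupling, mixed-sign case (eq. (A.3) of the paper):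
`n(ε)/ε² → −∂²F/∂θᵢ∂θⱼ(θ)` as `ε → 0⁺` when `∂F/∂θⱼ(θ) > 0` and
`∂²F/∂θᵢ∂θⱼ(θ) < 0`. -/
theorem splitting_rate_second_order_expansion_mixed
    (d : ℕ) (θ : EuclideanSpace ℝ (Fin d)) (i j : Fin d)
    (F : EuclideanSpace ℝ (Fin d) → ℝ) (hF : ContDiffAt ℝ 3 F θ)
    (hj : 0 < fderiv ℝ F θ (EuclideanSpace.single j 1))
    (hij : fderiv ℝ (fun x => fderiv ℝ F x (EuclideanSpace.single j 1)) θ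
      (EuclideanSpace.single i 1) < 0) :
    Tendsto (fun ε : ℝ =>
      let l1 : ℝ := F (θ + ε • (EuclideanSpace.single i 1 + EuclideanSpace.single j 1))
      let l2 : ℝ := F (θ + ε • EuclideanSpace.single i 1)
      let l3 : ℝ := F (θ + ε • EuclideanSpace.single j 1)
      let l4 : ℝ := F θ
      (l1 + l2 - 2 * min l1 l2 + l3 + l4 - 2 * min l3 l4
        - 2 * min (l1 - min l1 l2) (l3 - min l3 l4)
        - 2 * min (l2 - min l1 l2) (l4 - min l3 l4)) / ε ^ 2)
      (𝓝[>] 0)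
      (𝓝 (-(fderiv ℝ (fun x => fderiv ℝ F x (EuclideanSpace.single j 1)) θ
        (EuclideanSpace.single i 1)))) := by
  set v : EuclideanSpace ℝ (Fin d) := EuclideanSpace.single i 1 with hv
  set w : EuclideanSpace ℝ (Fin d) := EuclideanSpace.single j 1 with hw
  have hF2 : ContDiffAt ℝ 2 F θ := hF.of_le (by norm_num : (2 : WithTop ℕ∞) ≤ 3)
  have hdF : DifferentiableAt ℝ F θ := hF2.differentiableAt (by norm_num)
  -- second derivative
  have hf''at : HasFDerivAt (fderiv ℝ F) (fderiv ℝ (fderiv ℝ F) θ) θ := by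
    have h1 : ContDiffAt ℝ 1 (fderiv ℝ F) θ := hF2.fderiv_right (by norm_num)
    exact (h1.differentiableAt (by norm_num)).hasFDerivAt
  set D : ℝ := fderiv ℝ (fderiv ℝ F) θ v w with hD
  -- identify the iterated directional derivative with D
  have hDeq : fderiv ℝ (fun x => fderiv ℝ F x w) θ v = D := by
    have h2 : HasFDerivAt (fun x => fderiv ℝ F x w)
        ((ContinuousLinearMap.apply ℝ ℝ w).comp (fderiv ℝ (fderiv ℝ F) θ)) θ :=
      (ContinuousLinearMap.apply ℝ ℝ w).hasFDerivAt.comp θ hf''at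
    rw [h2.fderiv]
    rfl
  rw [hDeq]
  have hDneg : D < 0 := hDeq ▸ hij
  -- mixed second difference limit
  have hg2 := mixed_second_diff F θ hF2 v w
  -- first order limits
  have hsa := slope_dir F θ hdF (v + w)
  have hsb := slope_dir F θ hdF v
  have hsw := slope_dir F θ hdF w
  have hsmul : ∀ ε : ℝ, θ + ε • (v + w) = θ + ε • v + ε • w := by
    intro ε; rw [smul_add, add_assoc]
  have ha : Tendsto (fun ε : ℝ => (F (θ + ε • v + ε • w) - F (θ + ε • v)) / ε) (𝓝[>] 0)
      (𝓝 (fderiv ℝ F θ w)) := by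
    have := hsa.sub hsb
    rw [show fderiv ℝ F θ (v + w) - fderiv ℝ F θ v = fderiv ℝ F θ w by
      rw [map_add]; ring] at this
    refine this.congr fun ε => ?_
    rw [hsmul ε, div_sub_div_same]
    ring_nf
  -- eventual positivity / negativity facts
  have ea : ∀ᶠ ε in 𝓝[>] (0 : ℝ), 0 < F (θ + ε • v + ε • w) - F (θ + ε • v) := by
    filter_upwards [ha.eventually (eventually_gt_nhds hj), self_mem_nhdsWithin]
      with ε h1 (h2 : 0 < ε)
    have h3 : 0 < (F (θ + ε • v + ε • w) - F (θ + ε • v)) / ε * ε := mul_pos h1 h2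
    rwa [div_mul_cancel₀ _ (ne_of_gt h2)] at h3
  have eb : ∀ᶠ ε in 𝓝[>] (0 : ℝ), 0 < F (θ + ε • w) - F θ := by
    filter_upwards [hsw.eventually (eventually_gt_nhds hj), self_mem_nhdsWithin]
      with ε h1 (h2 : 0 < ε)
    have h3 : 0 < (F (θ + ε • w) - F θ) / ε * ε := mul_pos h1 h2
    rwa [div_mul_cancel₀ _ (ne_of_gt h2)] at h3
  have eg : ∀ᶠ ε in 𝓝[>] (0 : ℝ),
      F (θ + ε • v + ε • w) - F (θ + ε • v) - F (θ + ε • w) + F θ < 0 := by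
    filter_upwards [hg2.eventually (eventually_lt_nhds hDneg), self_mem_nhdsWithin]
      with ε h1 (h2 : 0 < ε)
    have h4 : (0:ℝ) < ε ^ 2 := by positivity
    have h3 : (F (θ + ε • v + ε • w) - F (θ + ε • v) - F (θ + ε • w) + F θ) / ε ^ 2 * ε ^ 2
        < 0 * ε ^ 2 := by
      exact mul_lt_mul_of_pos_right h1 h4
    rwa [div_mul_cancel₀ _ (ne_of_gt h4), zero_mul] at h3
  -- conclude
  have main : Tendsto (fun ε : ℝ =>
      -(F (θ + ε • v + ε • w) - F (θ + ε • v) - F (θ + ε • w) + F θ) / ε ^ 2)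
      (𝓝[>] 0) (𝓝 (-D)) := by
    have := hg2.neg
    refine this.congr fun ε => ?_
    rw [neg_div]
  refine main.congr' ?_
  filter_upwards [ea, eb, eg] with ε ha' hb' hg'
  show -(F (θ + ε • v + ε • w) - F (θ + ε • v) - F (θ + ε • w) + F θ) / ε ^ 2 = _
  set l1 : ℝ := F (θ + ε • (v + w)) with hl1
  set l2 : ℝ := F (θ + ε • v) with hl2
  set l3 : ℝ := F (θ + ε • w) with hl3
  set l4 : ℝ := F θ with hl4
  have e1 : F (θ + ε • v + ε • w) = l1 := by rw [hl1, hsmul ε]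
  rw [e1] at ha' hg' ⊢
  have m1 : min l1 l2 = l2 := min_eq_right (by linarith)
  have m2 : min l3 l4 = l4 := min_eq_right (by linarith)
  simp only [m1, m2]
  have m3 : min (l1 - l2) (l3 - l4) = l1 - l2 := min_eq_left (by linarith)
  have m4 : min (l2 - l2) (l4 - l4) = (0:ℝ) := by simp
  rw [m3, m4]
  ring
end

section
/- Let d ∈ ℕ, θ ∈ ℝ^d, and i, j ∈ {1,…,d}. Let F : ℝ^d → ℝ be three times continuously differentiable on a neighborhood of θ. For ε > 0 set λ₁(ε) = F(θ + ε(eᵢ+eⱼ)), λ₂(ε) = F(θ + εeᵢ), λ₃(ε) = F(θ + εeⱼ), λ₄(ε) = F(θ). If ∂F/∂θⱼ(θ) > 0 and ∂²F/∂θᵢ∂θⱼ(θ) > 0, then there exists ε₀ > 0 such that for all ε ∈ (0, ε₀): (a) λ₁(ε) − min(λ₁(ε), λ₂(ε)) − min(λ₁(ε) − min(λ₁(ε), λ₂(ε)), λ₃(ε) − min(λ₃(ε), λ₄(ε))) > 0; (b) λ₂(ε) − min(λ₁(ε), λ₂(ε)) − min(λ₂(ε) − min(λ₁(ε), λ₂(ε)),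 λ₄(ε) − min(λ₃(ε), λ₄(ε))) = 0; (c) λ₃(ε) − min(λ₃(ε), λ₄(ε)) − min(λ₁(ε) − min(λ₁(ε), λ₂(ε)), λ₃(ε) − min(λ₃(ε), λ₄(ε))) = 0; (d) λ₄(ε) − min(λ₃(ε), λ₄(ε)) − min(λ₂(ε) − min(λ₁(ε), λ₂(ε)), λ₄(ε) − min(λ₃(ε), λ₄(ε))) = 0. -/
open Filter Topology

variable {E : Type*} [NormedAddCommGroup E] [NormedSpace ℝ E]

lemma hasDerivAt_line (G : E → ℝ) (x v : E) (t : ℝ)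
    (h : DifferentiableAt ℝ G (x + t • v)) :
    HasDerivAt (fun s => G (x + s • v)) (fderiv ℝ G (x + t • v) v) t := by
  have hline : HasDerivAt (fun s : ℝ => x + s • v) v t := by
    simpa using ((hasDerivAt_id t).smul_const v).const_add x
  exact h.hasFDerivAt.comp_hasDerivAt t hline

lemma mvt_line (φ φ' : ℝ → ℝ) (ε : ℝ) (hε : 0 < ε)
    (h : ∀ t ∈ Set.Icc (0:ℝ) ε, HasDerivAt φ (φ' t) t) :
    ∃ c ∈ Set.Ioo (0:ℝ) ε, φ ε - φ 0 = ε * φ' c := by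
  have hc : ContinuousOn φ (Set.Icc (0:ℝ) ε) := fun t ht =>
    (h t ht).continuousAt.continuousWithinAt
  obtain ⟨c, hc1, hc2⟩ := exists_hasDerivAt_eq_slope φ φ' hε hc
    (fun t ht => h t (Set.mem_Icc_of_Ioo ht))
  refine ⟨c, hc1, ?_⟩
  field_simp at hc2
  rw [hc2, sub_zero]; field_simp

lemma min_alg (l1 l2 l3 l4 : ℝ) (h21 : l2 ≤ l1) (h43 : l4 ≤ l3)
    (hpos : 0 < l3 - l4) (hkey : l3 - l4 < l1 - l2) :
    (0 < l1 - min l1 l2 - min (l1 - min l1 l2) (l3 - min l3 l4)) ∧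
    (l2 - min l1 l2 - min (l2 - min l1 l2) (l4 - min l3 l4) = 0) ∧
    (l3 - min l3 l4 - min (l1 - min l1 l2) (l3 - min l3 l4) = 0) ∧
    (l4 - min l3 l4 - min (l2 - min l1 l2) (l4 - min l3 l4) = 0) := by
  rw [min_eq_right h21, min_eq_right h43,
    min_eq_right (le_of_lt hkey)]
  refine ⟨by linarith, ?_, by ring, ?_⟩ <;> simp


set_option maxHeartbeats 1000000

/-- Identification of which single coupled process jumps at the first splitting time in
the positive-sign case (eq. (A.2), first case): for small `ε > 0`, the residual coupling
intensity `Λ_{k,(1,0,0,0)}` is positive while `Λ_{k,(0,1,0,0)}`, `Λ_{k,(0,0,1,0)}` and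
`Λ_{k,(0,0,0,1)}` vanish. -/
theorem residual_coupling_intensities_pos_case
    (d : ℕ) (θ : EuclideanSpace ℝ (Fin d)) (i j : Fin d)
    (F : EuclideanSpace ℝ (Fin d) → ℝ) (hF : ContDiffAt ℝ 3 F θ)
    (hj : 0 < fderiv ℝ F θ (EuclideanSpace.single j 1))
    (hij : 0 < fderiv ℝ (fun x => fderiv ℝ F x (EuclideanSpace.single j 1)) θ
      (EuclideanSpace.single i 1)) :
    ∃ ε₀ > 0, ∀ ε : ℝ, 0 < ε → ε < ε₀ →
      let l1 : ℝ := F (θ + ε • (EuclideanSpace.single i 1 + EuclideanSpace.single j 1))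
      let l2 : ℝ := F (θ + ε • EuclideanSpace.single i 1)
      let l3 : ℝ := F (θ + ε • EuclideanSpace.single j 1)
      let l4 : ℝ := F θ
      (0 < l1 - min l1 l2 - min (l1 - min l1 l2) (l3 - min l3 l4)) ∧
      (l2 - min l1 l2 - min (l2 - min l1 l2) (l4 - min l3 l4) = 0) ∧
      (l3 - min l3 l4 - min (l1 - min l1 l2) (l3 - min l3 l4) = 0) ∧
      (l4 - min l3 l4 - min (l2 - min l1 l2) (l4 - min l3 l4) = 0) := by
  set ei : EuclideanSpace ℝ (Fin d) := EuclideanSpace.single i 1 with hei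
  set ej : EuclideanSpace ℝ (Fin d) := EuclideanSpace.single j 1 with hej
  set B : EuclideanSpace ℝ (Fin d) → ℝ := fun x => fderiv ℝ F x ej with hB
  have hB2 : ContDiffAt ℝ 2 B θ :=
    (hF.fderiv_right (by norm_num)).clm_apply contDiffAt_const
  have hB1 : ContDiffAt ℝ 1 (fderiv ℝ B) θ := hB2.fderiv_right (by norm_num)
  -- eventually facts near θ
  have E1 : ∀ᶠ x in 𝓝 θ, DifferentiableAt ℝ F x := by
    filter_upwards [hF.eventually (by norm_num)] with x hx
    exact hx.differentiableAt (by norm_num)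
  have E2 : ∀ᶠ x in 𝓝 θ, DifferentiableAt ℝ B x := by
    filter_upwards [hB2.eventually (by norm_num)] with x hx
    exact hx.differentiableAt (by norm_num)
  have E3 : ∀ᶠ x in 𝓝 θ, 0 < B x :=
    hB2.continuousAt.eventually (eventually_gt_nhds hj)
  have E4 : ∀ᶠ x in 𝓝 θ, 0 < fderiv ℝ B x ei := by
    have hcont : ContinuousAt (fun x => fderiv ℝ B x ei) θ :=
      (ContinuousLinearMap.apply ℝ ℝ ei).continuous.continuousAt.comp
        hB1.continuousAt
    exact hcont.eventually (eventually_gt_nhds hij)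
  obtain ⟨δ, hδ, hball⟩ := Metric.eventually_nhds_iff_ball.1 (((E1.and E2).and E3).and E4)
  refine ⟨δ / 2, by linarith, ?_⟩
  intro ε hε hεδ
  -- membership of relevant points in the ball
  have hnorm : ∀ a b : ℝ, a ∈ Set.Icc (0:ℝ) ε → b ∈ Set.Icc (0:ℝ) ε →
      (θ + a • ei) + b • ej ∈ Metric.ball θ δ := by
    intro a b ha hb
    rw [Metric.mem_ball, dist_eq_norm]
    have h1 : ‖a • ei‖ ≤ ε := by
      rw [norm_smul, hei, EuclideanSpace.norm_single, Real.norm_eq_abs]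
      simp only [norm_one, mul_one]
      rw [abs_of_nonneg ha.1]; exact ha.2
    have h2 : ‖b • ej‖ ≤ ε := by
      rw [norm_smul, hej, EuclideanSpace.norm_single, Real.norm_eq_abs]
      simp only [norm_one, mul_one]
      rw [abs_of_nonneg hb.1]; exact hb.2
    calc ‖(θ + a • ei) + b • ej - θ‖ = ‖a • ei + b • ej‖ := by congr 1; abel
      _ ≤ ‖a • ei‖ + ‖b • ej‖ := norm_add_le _ _
      _ ≤ ε + ε := add_le_add h1 h2
      _ < δ := by linarith
  have hmem : ∀ a b : ℝ, a ∈ Set.Icc (0:ℝ) ε → b ∈ Set.Icc (0:ℝ) ε →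
      DifferentiableAt ℝ F ((θ + a • ei) + b • ej) ∧
      DifferentiableAt ℝ B ((θ + a • ei) + b • ej) ∧
      0 < B ((θ + a • ei) + b • ej) ∧
      0 < fderiv ℝ B ((θ + a • ei) + b • ej) ei := by
    intro a b ha hb
    have := hball _ (hnorm a b ha hb)
    exact ⟨this.1.1.1, this.1.1.2, this.1.2, this.2⟩
  have hεIcc : ε ∈ Set.Icc (0:ℝ) ε := ⟨le_of_lt hε, le_refl ε⟩
  have h0Icc : (0:ℝ) ∈ Set.Icc (0:ℝ) ε := ⟨le_refl 0, le_of_lt hε⟩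
  -- Step 1: l3 - l4 > 0
  obtain ⟨c₁, hc₁, hc₁eq⟩ := mvt_line (fun t => F ((θ + (0:ℝ) • ei) + t • ej))
    (fun t => fderiv ℝ F ((θ + (0:ℝ) • ei) + t • ej) ej) ε hε
    (fun t ht => hasDerivAt_line F (θ + (0:ℝ) • ei) ej t
      (hmem 0 t h0Icc ht).1)
  have hc₁Icc : c₁ ∈ Set.Icc (0:ℝ) ε := Set.mem_Icc_of_Ioo hc₁
  have step1 : 0 < F (θ + ε • ej) - F θ := by
    have hBpos := (hmem 0 c₁ h0Icc hc₁Icc).2.2.1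
    rw [hB] at hBpos
    have : F ((θ + (0:ℝ) • ei) + ε • ej) - F ((θ + (0:ℝ) • ei) + (0:ℝ) • ej)
        = F (θ + ε • ej) - F θ := by simp
    rw [this] at hc₁eq
    rw [hc₁eq]
    exact mul_pos hε hBpos
  -- Step 2: (l1 - l2) - (l3 - l4) > 0 via two MVTs
  obtain ⟨c₂, hc₂, hc₂eq⟩ := mvt_line
    (fun t => F ((θ + ε • ei) + t • ej) - F ((θ + (0:ℝ) • ei) + t • ej))
    (fun t => fderiv ℝ F ((θ + ε • ei) + t • ej) ej
      - fderiv ℝ F ((θ + (0:ℝ) • ei) + t • ej) ej) ε hε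
    (fun t ht =>
      (hasDerivAt_line F (θ + ε • ei) ej t (hmem ε t hεIcc ht).1).sub
      (hasDerivAt_line F (θ + (0:ℝ) • ei) ej t (hmem 0 t h0Icc ht).1))
  have hc₂Icc : c₂ ∈ Set.Icc (0:ℝ) ε := Set.mem_Icc_of_Ioo hc₂
  -- inner MVT: s ↦ B (θ + c₂ • ej + s • ei)
  obtain ⟨c₃, hc₃, hc₃eq⟩ := mvt_line (fun s => B ((θ + c₂ • ej) + s • ei))
    (fun s => fderiv ℝ B ((θ + c₂ • ej) + s • ei) ei) ε hε
    (fun s hs => hasDerivAt_line B (θ + c₂ • ej) ei s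
      (by
        have := (hmem s c₂ hs hc₂Icc).2.1
        have hcomm : (θ + s • ei) + c₂ • ej = (θ + c₂ • ej) + s • ei := by abel
        rwa [hcomm] at this))
  have hc₃Icc : c₃ ∈ Set.Icc (0:ℝ) ε := Set.mem_Icc_of_Ioo hc₃
  have step2 : 0 < (F ((θ + ε • ei) + ε • ej) - F (θ + ε • ei))
      - (F (θ + ε • ej) - F θ) := by
    have hpos := (hmem c₃ c₂ hc₃Icc hc₂Icc).2.2.2
    have hcomm : (θ + c₃ • ei) + c₂ • ej = (θ + c₂ • ej) + c₃ • ei := by abel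
    rw [hcomm] at hpos
    have hinner : fderiv ℝ F ((θ + ε • ei) + c₂ • ej) ej
        - fderiv ℝ F ((θ + (0:ℝ) • ei) + c₂ • ej) ej
        = ε * fderiv ℝ B ((θ + c₂ • ej) + c₃ • ei) ei := by
      have e1 : ((θ + c₂ • ej) + ε • ei) = ((θ + ε • ei) + c₂ • ej) := by abel
      have e2 : ((θ + c₂ • ej) + (0:ℝ) • ei) = ((θ + (0:ℝ) • ei) + c₂ • ej) := by
        abel
      rw [hB] at hc₃eq
      simp only [e1, e2] at hc₃eq
      exact hc₃eq
    have houter : (F ((θ + ε • ei) + ε • ej) - F ((θ + (0:ℝ) • ei) + ε • ej))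
        - (F ((θ + ε • ei) + (0:ℝ) • ej) - F ((θ + (0:ℝ) • ei) + (0:ℝ) • ej))
        = ε * (ε * fderiv ℝ B ((θ + c₂ • ej) + c₃ • ei) ei) := by
      rw [← hinner]; exact hc₂eq
    have hsimp : F ((θ + ε • ei) + ε • ej) - F (θ + ε • ej)
        - (F (θ + ε • ei) - F θ)
        = ε * (ε * fderiv ℝ B ((θ + c₂ • ej) + c₃ • ei) ei) := by
      simpa using houter
    nlinarith [mul_pos hε (mul_pos hε hpos)]
  intro l1 l2 l3 l4
  have hl1 : l1 = F ((θ + ε • ei) + ε • ej) := by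
    show F (θ + ε • (ei + ej)) = _
    rw [smul_add, ← add_assoc]
  have h21 : l2 ≤ l1 := by
    rw [hl1]; show F (θ + ε • ei) ≤ _
    nlinarith [step1, step2]
  have h43 : l4 ≤ l3 := le_of_lt (by linarith [step1])
  have hpos' : 0 < l3 - l4 := step1
  have hkey : l3 - l4 < l1 - l2 := by
    rw [hl1]; show (F (θ + ε • ej) : ℝ) - F θ < _ - F (θ + ε • ei)
    linarith [step2]
  exact min_alg l1 l2 l3 l4 h21 h43 hpos' hkey
end

section
/- Let d ∈ ℕ, θ ∈ ℝ^d, and i, j ∈ {1,…,d}. Let F : ℝ^d → ℝ be three times continuously differentiable on a neighborhood of θ. For ε > 0 set λ₁(ε) = F(θ + ε(eᵢ+eⱼ)), λ₂(ε) = F(θ + εeᵢ), λ₃(ε) = F(θ + εeⱼ), λ₄(ε) = F(θ), and define m(ε) := min(λ₁(ε), λ₂(ε)) + min(λ₃(ε), λ₄(ε)) − 2·min(λ₁(ε), λ₂(ε), λ₃(ε), λ₄(ε)). If ∂F/∂θⱼ(θ) > 0, then m(ε)/ε → |∂F/∂θᵢ(θ)| as ε → 0⁺. -/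
set_option maxHeartbeats 1000000


open Filter Topology

/-- First-order expansion (Step 1.4 of the proof of the main theorem):
`m(ε)/ε → |∂F/∂θᵢ(θ)|` as `ε → 0⁺`, where `m(ε)` is the rate at which the four-fold
split coupling produces a simultaneous jump in exactly one pair of coupled processes. -/
theorem pair_splitting_rate_first_order_expansion
    (d : ℕ) (θ : EuclideanSpace ℝ (Fin d)) (i j : Fin d)
    (F : EuclideanSpace ℝ (Fin d) → ℝ) (hF : ContDiffAt ℝ 3 F θ)
    (hj : 0 < fderiv ℝ F θ (EuclideanSpace.single j 1)) :
    Tendsto (fun ε : ℝ =>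
      (min (F (θ + ε • (EuclideanSpace.single i 1 + EuclideanSpace.single j 1)))
          (F (θ + ε • EuclideanSpace.single i 1))
        + min (F (θ + ε • EuclideanSpace.single j 1)) (F θ)
        - 2 * min
            (min (F (θ + ε • (EuclideanSpace.single i 1 + EuclideanSpace.single j 1)))
              (F (θ + ε • EuclideanSpace.single i 1)))
            (min (F (θ + ε • EuclideanSpace.single j 1)) (F θ))) / ε)
      (𝓝[>] 0)
      (𝓝 |fderiv ℝ F θ (EuclideanSpace.single i 1)|) := by
  set L := fderiv ℝ F θ with hL
  have hd : DifferentiableAt ℝ F θ := hF.differentiableAt (by norm_num)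
  -- directional derivative along v
  have key : ∀ v : EuclideanSpace ℝ (Fin d),
      HasDerivAt (fun ε : ℝ => F (θ + ε • v)) (L v) 0 := by
    intro v
    have h1 : HasDerivAt (fun ε : ℝ => θ + ε • v) v 0 := by
      simpa using ((hasDerivAt_id (0 : ℝ)).smul_const v).const_add θ
    have hFd : HasFDerivAt F L (θ + (0 : ℝ) • v) := by
      simpa using hd.hasFDerivAt
    exact hFd.comp_hasDerivAt 0 h1
  -- slope convergence for differences
  have slope_tendsto : ∀ (v w : EuclideanSpace ℝ (Fin d)),
      Tendsto (fun ε : ℝ => (F (θ + ε • v) - F (θ + ε • w)) / ε) (𝓝[≠] 0)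
        (𝓝 (L v - L w)) := by
    intro v w
    have h : HasDerivAt (fun ε : ℝ => F (θ + ε • v) - F (θ + ε • w)) (L v - L w) 0 :=
      (key v).sub (key w)
    have := hasDerivAt_iff_tendsto_slope.1 h
    refine this.congr (fun ε => ?_)
    simp [slope_def_field, div_eq_inv_mul]
  set ei := EuclideanSpace.single i (1 : ℝ)
  set ej := EuclideanSpace.single j (1 : ℝ)
  have hgt : 𝓝[>] (0:ℝ) ≤ 𝓝[≠] (0:ℝ) := nhdsWithin_mono 0 (fun x hx => ne_of_gt hx)
  -- eventually λ₂ < λ₁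
  have pos_of_deriv : ∀ (v w : EuclideanSpace ℝ (Fin d)), 0 < L v - L w →
      ∀ᶠ ε in 𝓝[>] (0:ℝ), F (θ + ε • w) < F (θ + ε • v) := by
    intro v w hpos
    have h := (slope_tendsto v w).mono_left hgt
    have h2 : ∀ᶠ ε in 𝓝[>] (0:ℝ), 0 < (F (θ + ε • v) - F (θ + ε • w)) / ε :=
      h.eventually (eventually_gt_nhds hpos)
    filter_upwards [h2, self_mem_nhdsWithin] with ε hε hε0
    have := mul_pos hε (show (0:ℝ) < ε from hε0)
    rw [div_mul_cancel₀ _ (ne_of_gt hε0)] at this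
    linarith
  have h12 : ∀ᶠ ε in 𝓝[>] (0:ℝ), F (θ + ε • ei) < F (θ + ε • (ei + ej)) := by
    apply pos_of_deriv
    simp [map_add]
    exact hj
  have h34 : ∀ᶠ ε in 𝓝[>] (0:ℝ), F (θ + ε • (0 : EuclideanSpace ℝ (Fin d))) < F (θ + ε • ej) := by
    apply pos_of_deriv
    simpa using hj
  -- the main eventual equality
  have heq : (fun ε : ℝ =>
      (min (F (θ + ε • (ei + ej))) (F (θ + ε • ei))
        + min (F (θ + ε • ej)) (F θ)
        - 2 * min (min (F (θ + ε • (ei + ej))) (F (θ + ε • ei)))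
            (min (F (θ + ε • ej)) (F θ))) / ε)
      =ᶠ[𝓝[>] (0:ℝ)] fun ε => |(F (θ + ε • ei) - F (θ + ε • (0 : EuclideanSpace ℝ (Fin d)))) / ε| := by
    filter_upwards [h12, h34, self_mem_nhdsWithin] with ε hε12 hε34 hε0
    have h0 : θ + ε • (0 : EuclideanSpace ℝ (Fin d)) = θ := by simp
    rw [h0] at hε34 ⊢
    rw [min_eq_right hε12.le, min_eq_right hε34.le]
    rw [abs_div, abs_of_pos (show (0:ℝ) < ε from hε0)]
    congr 1
    rcases le_total (F (θ + ε • ei)) (F θ) with h | h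
    · rw [min_eq_left h, abs_of_nonpos (by linarith)]; ring
    · rw [min_eq_right h, abs_of_nonneg (by linarith)]; ring
  refine Tendsto.congr' heq.symm ?_
  have := ((slope_tendsto ei 0).mono_left hgt).abs
  simpa using this
end
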